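/- Let k ≥ 1, C > 0, (d_n)_{n≥1} a sequence of positive integers, and for each n let g_{n,1}, …, g_{n,k} be Hermitian d_n × d_n complex matrices; let τ_n denote the normalized trace on d_n × d_n matrices. Assume: (i) for every monomial P in k noncommuting variables, the limit lim_{n→∞} τ_n(P(g_{n,1}, …, g_{n,k})) exists; (ii) for each i ∈ {1, …, k} there is a Borel probability measure μ_i on ℝ whose support is contained in (−C, C) such that for every p ∈ ℕ, τ_n(g_{n,i}^p) → ∫ t^p dμ_i(t) as n → ∞. Let h : ℝ → ℝ be h(t) = t for |t| < C and h(t) = 0 for |t| ≥ C, and set g̃_{n,i} = h(g_{n,i}) (functional calculus applied to the Hermitian matrix g_{n,i}). Then for every monomial P in k noncommuting variables, lim_{n→∞} τ_n(P(g̃_{n,1}, …, g̃_{n,k})) = lim_{n→∞} τ_n(P(g_{n,1}, …, g_{n,k})). -/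

import Mathlib

open MeasureTheory Filter Topology

/-- The normalized trace of a square complex matrix. -/
noncomputable def normTrace {d : ℕ} (x : Matrix (Fin d) (Fin d) ℂ) : ℂ :=
  x.trace / (d : ℂ)

/-- Evaluation of a monomial (a word `w` in `k` noncommuting variables) at a `k`-tuple of
matrices. -/
noncomputable def evalWord {d k : ℕ} (w : List (Fin k)) (g : Fin k → Matrix (Fin d) (Fin d) ℂ) :
    Matrix (Fin d) (Fin d) ℂ :=
  (w.map g).prod

open Matrix
open scoped ComplexOrder

section Helpers

variable {n : Type*} [Fintype n] [DecidableEq n] {A : Matrix n n ℂ}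

lemma my_cfc_trace (hA : A.IsHermitian) (f : ℝ → ℝ) :
    (hA.cfc f).trace = ∑ i, (f (hA.eigenvalues i) : ℂ) := by
  rw [Matrix.IsHermitian.cfc, Unitary.conjStarAlgAut_apply, trace_mul_comm, ← mul_assoc,
    Unitary.coe_star_mul_self, one_mul, trace_diagonal]
  rfl

lemma my_cfc_mul (hA : A.IsHermitian) (f g : ℝ → ℝ) :
    hA.cfc f * hA.cfc g = hA.cfc (fun t => f t * g t) := by
  rw [Matrix.IsHermitian.cfc, Matrix.IsHermitian.cfc, Matrix.IsHermitian.cfc,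
    Unitary.conjStarAlgAut_apply, Unitary.conjStarAlgAut_apply, Unitary.conjStarAlgAut_apply]
  have h1 : ∀ (a b c d e f : Matrix n n ℂ), (a * b * c) * (d * e * f) = a * (b * (c * d) * e) * f := by
    intros; simp only [mul_assoc]
  rw [h1, Unitary.coe_star_mul_self, mul_one, diagonal_mul_diagonal]
  have h2 : (fun i => ((RCLike.ofReal : ℝ → ℂ) ∘ f ∘ hA.eigenvalues) i * ((RCLike.ofReal : ℝ → ℂ) ∘ g ∘ hA.eigenvalues) i)
      = (RCLike.ofReal : ℝ → ℂ) ∘ (fun t => f t * g t) ∘ hA.eigenvalues := by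
    ext i; simp
  rw [h2]

lemma my_cfc_one (hA : A.IsHermitian) : hA.cfc (fun _ => 1) = 1 := by
  rw [Matrix.IsHermitian.cfc, Unitary.conjStarAlgAut_apply]
  have h2 : ((RCLike.ofReal : ℝ → ℂ) ∘ (fun _ : ℝ => (1:ℝ)) ∘ hA.eigenvalues) = fun _ => (1:ℂ) := by
    ext i; simp
  rw [h2, diagonal_one, mul_one, Unitary.mul_star_self_of_mem (SetLike.coe_mem _)]

lemma my_cfc_id (hA : A.IsHermitian) : hA.cfc (fun t => t) = A := by
  rw [Matrix.IsHermitian.cfc]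
  exact hA.spectral_theorem.symm

lemma my_cfc_sub (hA : A.IsHermitian) (f g : ℝ → ℝ) :
    hA.cfc f - hA.cfc g = hA.cfc (fun t => f t - g t) := by
  rw [Matrix.IsHermitian.cfc, Matrix.IsHermitian.cfc, Matrix.IsHermitian.cfc,
    Unitary.conjStarAlgAut_apply, Unitary.conjStarAlgAut_apply, Unitary.conjStarAlgAut_apply,
    ← sub_mul, ← mul_sub, diagonal_sub]
  have h2 : (fun i => ((RCLike.ofReal : ℝ → ℂ) ∘ f ∘ hA.eigenvalues) i - ((RCLike.ofReal : ℝ → ℂ) ∘ g ∘ hA.eigenvalues) i)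
      = (RCLike.ofReal : ℝ → ℂ) ∘ (fun t => f t - g t) ∘ hA.eigenvalues := by
    ext i; simp
  rw [h2]

lemma my_cfc_smul (hA : A.IsHermitian) (r : ℝ) (f : ℝ → ℝ) :
    ((r : ℝ) : ℂ) • hA.cfc f = hA.cfc (fun t => r * f t) := by
  rw [Matrix.IsHermitian.cfc, Matrix.IsHermitian.cfc,
    Unitary.conjStarAlgAut_apply, Unitary.conjStarAlgAut_apply, ← smul_mul_assoc, ← mul_smul_comm,
    ← diagonal_smul]
  have h2 : ((r : ℝ) : ℂ) • ((RCLike.ofReal : ℝ → ℂ) ∘ f ∘ hA.eigenvalues)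
      = (RCLike.ofReal : ℝ → ℂ) ∘ (fun t => r * f t) ∘ hA.eigenvalues := by
    ext i; simp

  rw [h2]

lemma my_cfc_pow (hA : A.IsHermitian) (f : ℝ → ℝ) (p : ℕ) :
    hA.cfc f ^ p = hA.cfc (fun t => f t ^ p) := by
  induction p with
  | zero => simpa using (my_cfc_one hA).symm
  | succ p ih =>
      rw [pow_succ, ih, my_cfc_mul]
      congr 1

lemma my_cfc_herm (hA : A.IsHermitian) (f : ℝ → ℝ) : (hA.cfc f).IsHermitian := by
  rw [← hA.cfc_eq]
  exact (cfc_predicate f A : IsSelfAdjoint _)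

lemma my_cfc_psd (hA : A.IsHermitian) (f : ℝ → ℝ) (hf : ∀ t, 0 ≤ f t) :
    (hA.cfc f).PosSemidef := by
  have hd : PosSemidef (diagonal (RCLike.ofReal ∘ f ∘ hA.eigenvalues) : Matrix n n ℂ) := by
    refine PosSemidef.diagonal fun i => ?_
    exact RCLike.ofReal_nonneg.mpr (hf _)
  have := hd.mul_mul_conjTranspose_same (hA.eigenvectorUnitary : Matrix n n ℂ)
  rw [Matrix.IsHermitian.cfc, Unitary.conjStarAlgAut_apply]
  rwa [← star_eq_conjTranspose] at this

lemma my_diag_nonneg {M : Matrix n n ℂ} (hM : M.PosSemidef) (i : n) : 0 ≤ M i i := by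
  have := hM.dotProduct_mulVec_nonneg (Pi.single i 1)
  simpa [dotProduct, mulVec, Pi.single_apply] using this

lemma my_trace_re_nonneg {M : Matrix n n ℂ} (hM : M.PosSemidef) : 0 ≤ M.trace.re := by
  have h : ∀ i, 0 ≤ (M i i).re := fun i => (Complex.le_def.mp (my_diag_nonneg hM i)).1
  rw [Matrix.trace, Complex.re_sum]
  exact Finset.sum_nonneg fun i _ => h i

lemma my_trace_mul_psd_le {M P : Matrix n n ℂ} (hM : M.PosSemidef) (c : ℝ)
    (hc : ((c : ℂ) • 1 - P).PosSemidef) : (M * P).trace.re ≤ c * M.trace.re := by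
  obtain ⟨S, hS, hSH⟩ : ∃ S : Matrix n n ℂ, S * S = M ∧ Sᴴ = S := by
    open scoped MatrixOrder in
    exact ⟨CFC.sqrt M, CFC.sqrt_mul_sqrt_self M (Matrix.nonneg_iff_posSemidef.mpr hM),
      (CFC.sqrt_nonneg M).posSemidef.isHermitian⟩
  have key : (S * ((c : ℂ) • 1 - P) * S).PosSemidef := by
    have := hc.conjTranspose_mul_mul_same S
    rwa [hSH] at this
  have h1 : S * ((c : ℂ) • 1 - P) * S = (c : ℂ) • M - S * P * S := by
    rw [mul_sub, sub_mul, mul_smul_comm, mul_one, smul_mul_assoc, hS]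
  have h2 : (S * P * S).trace = (M * P).trace := by
    rw [trace_mul_cycle, hS]
  have h3 := my_trace_re_nonneg key
  rw [h1, trace_sub, Complex.sub_re, h2, trace_smul, smul_eq_mul, Complex.re_ofReal_mul]
    at h3
  linarith

lemma my_sum_abs_sq (X : Matrix n n ℂ) :
    (X * Xᴴ).trace.re = ∑ p : n × n, ‖X p.1 p.2‖ ^ 2 := by
  rw [Matrix.trace, Complex.re_sum, Fintype.sum_prod_type]
  refine Finset.sum_congr rfl fun i _ => ?_
  simp only [Matrix.diag, Matrix.mul_apply, conjTranspose_apply, Complex.re_sum]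
  refine Finset.sum_congr rfl fun j _ => ?_
  rw [show star (X i j) = (starRingEnd ℂ) (X i j) from rfl, Complex.mul_conj]
  simp [Complex.normSq_eq_norm_sq, ← Complex.ofReal_pow]

lemma my_cs_trace (X Y : Matrix n n ℂ) :
    ‖(X * Y).trace‖ ≤ Real.sqrt ((X * Xᴴ).trace.re) * Real.sqrt ((Yᴴ * Y).trace.re) := by
  let v : EuclideanSpace ℂ (n × n) := WithLp.toLp 2 (fun p : n × n => star (X p.1 p.2))
  let w : EuclideanSpace ℂ (n × n) := WithLp.toLp 2 (fun p : n × n => Y p.2 p.1)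
  have h1 : (X * Y).trace = inner ℂ v w := by
    simp only [PiLp.inner_apply, RCLike.inner_apply, v, w, starRingEnd_apply, star_star]
    rw [Matrix.trace]
    simp only [Matrix.diag, Matrix.mul_apply]
    rw [Fintype.sum_prod_type]
    exact Finset.sum_congr rfl fun i _ => Finset.sum_congr rfl fun j _ => mul_comm _ _
  have h2 : ‖v‖ = Real.sqrt ((X * Xᴴ).trace.re) := by
    rw [EuclideanSpace.norm_eq, my_sum_abs_sq]
    congr 1
    exact Finset.sum_congr rfl fun p _ => by simp [v]
  have h3 : ‖w‖ = Real.sqrt ((Yᴴ * Y).trace.re) := by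
    have h3' := my_sum_abs_sq Yᴴ
    rw [conjTranspose_conjTranspose] at h3'
    rw [EuclideanSpace.norm_eq, h3']
    congr 1
    exact Finset.sum_congr rfl fun p _ => by simp [w, conjTranspose_apply]
  calc ‖(X * Y).trace‖ = ‖inner ℂ v w‖ := by rw [h1]
    _ ≤ ‖v‖ * ‖w‖ := norm_inner_le_norm v w
    _ = _ := by rw [h2, h3]

lemma my_psd_smul {M : Matrix n n ℂ} (hM : M.PosSemidef) {c : ℝ} (hc : 0 ≤ c) :
    (((c : ℝ) : ℂ) • M).PosSemidef := by
  constructor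
  · have h := hM.isHermitian
    unfold Matrix.IsHermitian at *
    rw [conjTranspose_smul, h]
    congr 1
    simp
  · exact (hM.smul (Complex.zero_le_real.mpr hc)).2

lemma my_prod_conj_le (l : List (Matrix n n ℂ)) (c : ℝ) (hc : 0 ≤ c)
    (hx : ∀ x ∈ l, x.IsHermitian ∧ (((c ^ 2 : ℝ) : ℂ) • 1 - x * x).PosSemidef) :
    ((((c ^ (2 * l.length) : ℝ)) : ℂ) • 1 - l.prod * (l.prod)ᴴ).PosSemidef := by
  induction l with
  | nil => simp [Matrix.PosSemidef.zero]
  | cons a l ih =>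
    have ha := (hx a (List.mem_cons_self)).1
    have ha2 := (hx a (List.mem_cons_self)).2
    have ihl := ih (fun x hxl => hx x (List.mem_cons_of_mem a hxl))
    have hcast : (((c ^ (2 * (a :: l).length) : ℝ)) : ℂ)
        = (((c ^ (2 * l.length) : ℝ)) : ℂ) * (((c ^ 2 : ℝ)) : ℂ) := by
      push_cast
      rw [List.length_cons, ← pow_add]
      ring
    have hsplit : (((c ^ (2 * (a :: l).length) : ℝ)) : ℂ) • 1
        - (a :: l).prod * ((a :: l).prod)ᴴ
        = a * ((((c ^ (2 * l.length) : ℝ)) : ℂ) • 1 - l.prod * l.prodᴴ) * a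
          + (((c ^ (2 * l.length) : ℝ)) : ℂ) • ((((c ^ 2 : ℝ)) : ℂ) • 1 - a * a) := by
      rw [List.prod_cons, conjTranspose_mul, ha.eq, hcast, smul_sub, smul_smul]
      simp only [mul_sub, sub_mul, mul_smul_comm, smul_mul_assoc, mul_one, one_mul, mul_assoc]
      abel
    rw [hsplit]
    refine Matrix.PosSemidef.add ?_ ?_
    · have := ihl.conjTranspose_mul_mul_same a
      rwa [ha.eq] at this
    · exact my_psd_smul ha2 (by positivity)

lemma my_key_bound (V D B : Matrix n n ℂ) (hD : D.IsHermitian) (c : ℝ)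
    (hV : (((c : ℝ) : ℂ) • 1 - V * Vᴴ).PosSemidef) :
    ‖(V * (D * B)).trace‖
      ≤ Real.sqrt ((D * D).trace.re) * Real.sqrt (c * (Bᴴ * B).trace.re) := by
  have h1 : (V * (D * B)).trace = (D * (B * V)).trace := by
    rw [trace_mul_comm, mul_assoc]
  have h2 := my_cs_trace D (B * V)
  rw [hD.eq] at h2
  have h3 : ((B * V)ᴴ * (B * V)).trace = ((Bᴴ * B) * (V * Vᴴ)).trace := by
    rw [conjTranspose_mul]
    rw [show Vᴴ * Bᴴ * (B * V) = Vᴴ * (Bᴴ * B * V) by simp [mul_assoc]]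
    rw [trace_mul_comm, mul_assoc, mul_assoc]
  have h4 : ((Bᴴ * B) * (V * Vᴴ)).trace.re ≤ c * (Bᴴ * B).trace.re :=
    my_trace_mul_psd_le (posSemidef_conjTranspose_mul_self B) c hV
  calc ‖(V * (D * B)).trace‖
      = ‖(D * (B * V)).trace‖ := by rw [h1]
    _ ≤ Real.sqrt ((D * D).trace.re) * Real.sqrt (((B * V)ᴴ * (B * V)).trace.re) := h2
    _ ≤ Real.sqrt ((D * D).trace.re) * Real.sqrt (c * (Bᴴ * B).trace.re) := by
        have h5 : ((B * V)ᴴ * (B * V)).trace.re ≤ c * (Bᴴ * B).trace.re := by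
          rw [h3]; exact h4
        exact mul_le_mul_of_nonneg_left (Real.sqrt_le_sqrt h5) (Real.sqrt_nonneg _)

lemma my_trunc_bound (hA : A.IsHermitian) (c : ℝ) (q : ℕ) (f : ℝ → ℝ)
    (hf : ∀ t, c ^ (2*q) * (f t * f t) ≤ t ^ (2*q+2)) :
    c ^ (2*q) * (hA.cfc (fun t => f t * f t)).trace.re ≤ (A ^ (2*q+2)).trace.re := by
  conv_rhs => rw [← my_cfc_id hA]
  rw [my_cfc_pow, my_cfc_trace, my_cfc_trace, Complex.re_sum, Complex.re_sum]
  simp only [Complex.ofReal_re]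
  rw [Finset.mul_sum]
  exact Finset.sum_le_sum fun i _ => hf _

end Helpers

lemma my_moment_small (μ : Measure ℝ) [IsProbabilityMeasure μ] (C : ℝ) (hC : 0 < C)
    (hsupp : ∀ x : ℝ, x ∉ Set.Ioo (-C) C → ∃ U ∈ 𝓝 x, μ U = 0) (ε : ℝ) (hε : 0 < ε) :
    ∃ q : ℕ, (∫ t, t ^ (2 * q + 2) ∂μ) < ε * C ^ (2 * q) := by
  set s : Set ℝ := (Set.Ioo (-C) C)ᶜ with hs
  have hnull : μ s = 0 := by
    refine measure_null_of_locally_null s fun x hx => ?_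
    obtain ⟨U, hU, hU0⟩ := hsupp x (by simpa [s] using hx)
    exact ⟨U, nhdsWithin_le_nhds hU, hU0⟩
  have hae : ∀ᵐ t ∂μ, t ∈ Set.Ioo (-C) C := by
    rw [ae_iff]
    have he : {a : ℝ | ¬ a ∈ Set.Ioo (-C) C} = s := rfl
    rw [he, hnull]
  set F : ℕ → ℝ → ℝ := fun q t => (Set.Ioo (-C) C).indicator (fun t => t ^ (2*q+2) / C ^ (2*q)) t
    with hF
  have hmeas : ∀ q, AEStronglyMeasurable (F q) μ := by
    intro q
    refine (Measurable.indicator (by fun_prop) measurableSet_Ioo).aestronglyMeasurable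
  have hbound : ∀ q, ∀ᵐ t ∂μ, ‖F q t‖ ≤ C ^ 2 := by
    intro q
    refine Filter.Eventually.of_forall fun t => ?_
    rcases Classical.em (t ∈ Set.Ioo (-C) C) with ht | ht
    · rw [hF]
      simp only [Set.indicator_of_mem ht]
      rw [Real.norm_eq_abs, abs_div, abs_pow, abs_pow, abs_of_pos hC]
      rw [div_le_iff₀ (by positivity)]
      have h1 : |t| ≤ C := le_of_lt (abs_lt.mpr ⟨ht.1, ht.2⟩)
      calc |t| ^ (2*q+2) ≤ C ^ (2*q+2) := pow_le_pow_left₀ (abs_nonneg t) h1 _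
        _ = C ^ 2 * C ^ (2*q) := by ring
    · rw [hF]; simp [Set.indicator_of_notMem ht]; positivity
  have hlim : ∀ᵐ t ∂μ, Tendsto (fun q => F q t) atTop (𝓝 0) := by
    refine hae.mono fun t ht => ?_
    have heq : ∀ q, F q t = t ^ 2 * (t ^ 2 / C ^ 2) ^ q := by
      intro q
      rw [hF]
      simp only [Set.indicator_of_mem ht]
      rw [div_pow, ← pow_mul]
      rw [show 2 * q + 2 = 2 + q * 2 by ring, pow_add, pow_mul]
      ring_nf
    simp only [heq]
    rw [show (0:ℝ) = t^2 * 0 by ring]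
    refine Tendsto.const_mul _ (tendsto_pow_atTop_nhds_zero_of_lt_one (by positivity) ?_)
    rw [div_lt_one (by positivity)]
    have h1 : |t| < C := abs_lt.mpr ⟨ht.1, ht.2⟩
    calc t ^ 2 = |t| ^ 2 := (sq_abs t).symm
      _ < C ^ 2 := by
        have := mul_self_lt_mul_self (abs_nonneg t) h1
        simpa [pow_two] using this
  have hint := tendsto_integral_of_dominated_convergence (fun _ => C ^ 2) hmeas
    (integrable_const _) hbound hlim
  rw [integral_zero] at hint
  have h2 := hint.eventually_lt_const (show (0:ℝ) < ε by exact hε)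
  obtain ⟨q, hq⟩ := h2.exists
  refine ⟨q, ?_⟩
  have heqint : (∫ t, F q t ∂μ) = (∫ t, t ^ (2*q+2) ∂μ) / C ^ (2*q) := by
    rw [← integral_div]
    refine integral_congr_ae (hae.mono fun t ht => ?_)
    rw [hF]; simp [Set.indicator_of_mem ht]
  rw [heqint, div_lt_iff₀ (by positivity)] at hq
  linarith [hq]

section WordHelpers

lemma evalWord_cons {d k : ℕ} (i : Fin k) (w : List (Fin k))
    (g : Fin k → Matrix (Fin d) (Fin d) ℂ) :
    evalWord (i :: w) g = g i * evalWord w g := by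
  simp [evalWord]

lemma evalWord_append {d k : ℕ} (v w : List (Fin k))
    (g : Fin k → Matrix (Fin d) (Fin d) ℂ) :
    evalWord (v ++ w) g = evalWord v g * evalWord w g := by
  simp [evalWord]

lemma evalWord_conjT {d k : ℕ} (w : List (Fin k)) (g : Fin k → Matrix (Fin d) (Fin d) ℂ)
    (hg : ∀ i, (g i).IsHermitian) :
    (evalWord w g)ᴴ = evalWord w.reverse g := by
  rw [evalWord, Matrix.conjTranspose_list_prod, List.map_map]
  have h1 : Matrix.conjTranspose ∘ g = g := funext fun i => (hg i).eq
  rw [h1, evalWord, List.map_reverse]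

lemma normTrace_re {d : ℕ} (x : Matrix (Fin d) (Fin d) ℂ) :
    (normTrace x).re = x.trace.re / d := by
  rw [normTrace, show ((d:ℕ):ℂ) = ((d:ℝ):ℂ) by push_cast; ring, Complex.div_ofReal_re]

lemma normTrace_abs {d : ℕ} (x : Matrix (Fin d) (Fin d) ℂ) :
    ‖normTrace x‖ = ‖x.trace‖ / d := by
  rw [normTrace, norm_div]
  simp

lemma normTrace_add {d : ℕ} (x y : Matrix (Fin d) (Fin d) ℂ) :
    normTrace (x + y) = normTrace x + normTrace y := by
  rw [normTrace, normTrace, normTrace, trace_add, add_div]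

lemma normTrace_sub {d : ℕ} (x y : Matrix (Fin d) (Fin d) ℂ) :
    normTrace (x - y) = normTrace x - normTrace y := by
  rw [normTrace, normTrace, normTrace, trace_sub, sub_div]

end WordHelpers

theorem stmt2 (k : ℕ) (hk : 1 ≤ k) (C : ℝ) (hC : 0 < C)
    (d : ℕ → ℕ) (hd : ∀ n, 0 < d n)
    (g : (n : ℕ) → Fin k → Matrix (Fin (d n)) (Fin (d n)) ℂ)
    (hherm : ∀ n i, (g n i).IsHermitian)
    (L : List (Fin k) → ℂ)
    (hL : ∀ w : List (Fin k),
      Tendsto (fun n => normTrace (evalWord w (g n))) atTop (𝓝 (L w)))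
    (μ : Fin k → Measure ℝ) (hprob : ∀ i, IsProbabilityMeasure (μ i))
    (hsupp : ∀ i, ∀ x : ℝ, x ∉ Set.Ioo (-C) C → ∃ U ∈ 𝓝 x, μ i U = 0)
    (hmom : ∀ i (p : ℕ),
      Tendsto (fun n => normTrace (g n i ^ p)) atTop (𝓝 ((∫ t, t ^ p ∂(μ i) : ℝ) : ℂ)))
    (h : ℝ → ℝ) (hh : ∀ t, h t = if |t| < C then t else 0) :
    ∀ w : List (Fin k),
      Tendsto (fun n => normTrace (evalWord w (fun i => (hherm n i).cfc h)))
        atTop (𝓝 (L w)) := by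
  have hdR : ∀ n, (0:ℝ) < (d n : ℝ) := fun n => by exact_mod_cast hd n
  -- the residual function
  set f : ℝ → ℝ := fun t => if |t| < C then 0 else t with hfdef
  have hth : ∀ t, t - h t = f t := by
    intro t
    rw [hh]
    by_cases H : |t| < C <;> simp [hfdef, H]
  -- difference of matrices
  have hDdef : ∀ n i, g n i - (hherm n i).cfc h = (hherm n i).cfc f := by
    intro n i
    have hfun : (fun t : ℝ => t - h t) = f := funext hth
    have h1 : (hherm n i).cfc (fun t => t) - (hherm n i).cfc h = (hherm n i).cfc f := by
      rw [my_cfc_sub, hfun]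
    rw [← h1, my_cfc_id]
  -- boundedness of truncated matrices
  have hGbd : ∀ n i,
      (((C ^ 2 : ℝ) : ℂ) • 1 - (hherm n i).cfc h * (hherm n i).cfc h).PosSemidef := by
    intro n i
    rw [my_cfc_mul]
    have h1 : ((C ^ 2 : ℝ) : ℂ) • (1 : Matrix (Fin (d n)) (Fin (d n)) ℂ)
        = (hherm n i).cfc (fun t => C ^ 2 * 1) := by
      rw [← my_cfc_one (hherm n i), my_cfc_smul]
    rw [h1, my_cfc_sub]
    refine my_cfc_psd _ _ fun t => ?_
    rw [hh]
    by_cases H : |t| < C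
    · have h2 : t ^ 2 < C ^ 2 := by
        nlinarith [abs_nonneg t, sq_abs t]
      simp only [if_pos H]
      nlinarith
    · simp only [if_neg H]
      nlinarith
  -- the key convergence: normalized trace of the square of the残residual tends to 0
  have hDtend : ∀ i, Tendsto
      (fun n => ((hherm n i).cfc (fun t => f t * f t)).trace.re / (d n : ℝ)) atTop (𝓝 0) := by
    intro i
    have hα0 : ∀ n, 0 ≤ ((hherm n i).cfc (fun t => f t * f t)).trace.re / (d n : ℝ) := by
      intro n
      exact div_nonneg (my_trace_re_nonneg (my_cfc_psd _ _ fun t => mul_self_nonneg _))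
        (le_of_lt (hdR n))
    refine tendsto_order.2 ⟨fun a ha => Eventually.of_forall fun n =>
      lt_of_lt_of_le ha (hα0 n), fun ε hε => ?_⟩
    haveI := hprob i
    obtain ⟨q, hq⟩ := my_moment_small (μ i) C hC (hsupp i) ε hε
    have hre : Tendsto (fun n => (normTrace (g n i ^ (2*q+2))).re) atTop
        (𝓝 (∫ t, t ^ (2*q+2) ∂ μ i)) := by
      have := (Complex.continuous_re.tendsto _).comp (hmom i (2*q+2))
      simpa [Function.comp_def] using this
    have hev := hre.eventually_lt_const hq
    refine hev.mono fun m hm => ?_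
    -- pointwise scalar inequality
    have hscal : ∀ t : ℝ, C ^ (2*q) * (f t * f t) ≤ t ^ (2*q+2) := by
      intro t
      by_cases H : |t| < C
      · simp only [hfdef, if_pos H, mul_zero, zero_mul]
        rw [show 2*q+2 = (q+1)*2 by ring, pow_mul]
        positivity
      · simp only [hfdef, if_neg H]
        have h1 : C ^ 2 ≤ t ^ 2 := by
          have habs : C ≤ |t| := not_lt.mp H
          calc C ^ 2 ≤ |t| ^ 2 := pow_le_pow_left₀ (le_of_lt hC) habs 2
            _ = t ^ 2 := sq_abs t
        have h2 : (C^2)^q ≤ (t^2)^q := pow_le_pow_left₀ (by positivity) h1 q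
        calc C ^ (2*q) * (t * t) = (C^2)^q * t^2 := by
              rw [← pow_mul]; ring
          _ ≤ (t^2)^q * t^2 := mul_le_mul_of_nonneg_right h2 (sq_nonneg t)
          _ = t ^ (2*q+2) := by rw [← pow_mul, ← pow_add]
    have hmono := my_trunc_bound (hherm m i) C q f hscal
    have hnr : (normTrace (g m i ^ (2*q+2))).re = (g m i ^ (2*q+2)).trace.re / (d m : ℝ) :=
      normTrace_re _
    rw [hnr] at hm
    have hCq : (0:ℝ) < C ^ (2*q) := by positivity
    -- α m ≤ (tr pow / d) / C^{2q} < ε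
    have hstep : ((hherm m i).cfc (fun t => f t * f t)).trace.re / (d m : ℝ)
        ≤ ((g m i ^ (2*q+2)).trace.re / (d m : ℝ)) / C ^ (2*q) := by
      rw [div_div, div_le_div_iff₀ (hdR m) (mul_pos (hdR m) hCq)]
      nlinarith [hmono, hdR m, hCq]
    have hstep2 : ((g m i ^ (2*q+2)).trace.re / (d m : ℝ)) / C ^ (2*q) < ε := by
      rw [div_lt_iff₀ hCq]
      linarith
    linarith
  -- main telescoping claim
  have main : ∀ w v : List (Fin k),
      Tendsto (fun n => normTrace (evalWord v (fun i => (hherm n i).cfc h) *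
        (evalWord w (g n) - evalWord w (fun i => (hherm n i).cfc h)))) atTop (𝓝 0) := by
    intro w
    induction w with
    | nil =>
      intro v
      have he : (fun n : ℕ => normTrace (evalWord v (fun i => (hherm n i).cfc h) *
          (evalWord ([] : List (Fin k)) (g n)
            - evalWord ([] : List (Fin k)) (fun i => (hherm n i).cfc h)))) = fun _ => 0 := by
        funext n
        simp [evalWord, normTrace]
      rw [he]
      exact tendsto_const_nhds
    | cons i w ihw =>
      intro v
      -- split into two terms
      have hsplit : ∀ n, normTrace (evalWord v (fun j => (hherm n j).cfc h) *
          (evalWord (i :: w) (g n) - evalWord (i :: w) (fun j => (hherm n j).cfc h)))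
          = normTrace (evalWord v (fun j => (hherm n j).cfc h) *
              ((hherm n i).cfc f * evalWord w (g n)))
            + normTrace (evalWord (v ++ [i]) (fun j => (hherm n j).cfc h) *
              (evalWord w (g n) - evalWord w (fun j => (hherm n j).cfc h))) := by
        intro n
        rw [← normTrace_add]
        congr 1
        rw [evalWord_cons, evalWord_cons, evalWord_append, ← hDdef n i]
        have h1 : evalWord [i] (fun j => (hherm n j).cfc h) = (hherm n i).cfc h := by
          simp [evalWord]
        rw [h1]
        noncomm_ring
      -- first term tends to zero
      have T1 : Tendsto (fun n => normTrace (evalWord v (fun j => (hherm n j).cfc h) *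
          ((hherm n i).cfc f * evalWord w (g n)))) atTop (𝓝 0) := by
        set c : ℝ := C ^ (2 * v.length) with hcdef
        have hc0 : 0 ≤ c := by positivity
        -- the U bound
        have hVbd : ∀ n, (((c : ℝ) : ℂ) • 1 -
            evalWord v (fun j => (hherm n j).cfc h) *
            (evalWord v (fun j => (hherm n j).cfc h))ᴴ).PosSemidef := by
          intro n
          have := my_prod_conj_le (v.map (fun j => (hherm n j).cfc h)) C (le_of_lt hC)
            (by
              intro x hxl
              obtain ⟨j, _, rfl⟩ := List.mem_map.mp hxl
              exact ⟨my_cfc_herm _ _, hGbd n j⟩)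
          rw [List.length_map] at this
          exact this
        -- β sequence
        set β : ℕ → ℝ := fun n => ((evalWord w (g n))ᴴ * evalWord w (g n)).trace.re / (d n : ℝ)
          with hβdef
        have hβconv : Tendsto β atTop (𝓝 ((L (w.reverse ++ w)).re)) := by
          have h1 : ∀ n, β n = (normTrace (evalWord (w.reverse ++ w) (g n))).re := by
            intro n
            rw [hβdef, normTrace_re]
            congr 2
            rw [evalWord_append, ← evalWord_conjT w (g n) (hherm n)]
          have h2 : β = fun n => (normTrace (evalWord (w.reverse ++ w) (g n))).re := funext h1
          rw [h2]
          exact (Complex.continuous_re.tendsto _).comp (hL (w.reverse ++ w))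
        have hβ0 : ∀ n, 0 ≤ β n := by
          intro n
          exact div_nonneg (my_trace_re_nonneg (posSemidef_conjTranspose_mul_self _))
            (le_of_lt (hdR n))
        -- pointwise bound
        have hb : ∀ n, ‖normTrace (evalWord v (fun j => (hherm n j).cfc h) *
            ((hherm n i).cfc f * evalWord w (g n)))‖
            ≤ Real.sqrt (((hherm n i).cfc (fun t => f t * f t)).trace.re / (d n : ℝ))
              * Real.sqrt (c * β n) := by
          intro n
          have hkey := my_key_bound (evalWord v (fun j => (hherm n j).cfc h))
            ((hherm n i).cfc f) (evalWord w (g n)) (my_cfc_herm _ _) c (hVbd n)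
          rw [my_cfc_mul] at hkey
          rw [normTrace_abs]
          have hP0 : 0 ≤ ((hherm n i).cfc (fun t => f t * f t)).trace.re :=
            my_trace_re_nonneg (my_cfc_psd _ _ fun t => mul_self_nonneg _)
          have hQ0 : 0 ≤ c * ((evalWord w (g n))ᴴ * evalWord w (g n)).trace.re :=
            mul_nonneg hc0 (my_trace_re_nonneg (posSemidef_conjTranspose_mul_self _))
          have heq : Real.sqrt (((hherm n i).cfc (fun t => f t * f t)).trace.re / (d n : ℝ))
              * Real.sqrt (c * β n)
              = (Real.sqrt (((hherm n i).cfc (fun t => f t * f t)).trace.re)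
                * Real.sqrt (c * ((evalWord w (g n))ᴴ * evalWord w (g n)).trace.re)) / (d n : ℝ) := by
            rw [hβdef]
            rw [show c * (((evalWord w (g n))ᴴ * evalWord w (g n)).trace.re / (d n : ℝ))
              = (c * ((evalWord w (g n))ᴴ * evalWord w (g n)).trace.re) / (d n : ℝ) by ring]
            rw [Real.sqrt_div hP0, Real.sqrt_div hQ0, div_mul_div_comm,
              Real.mul_self_sqrt (le_of_lt (hdR n))]
          rw [heq]
          gcongr
        -- bound tends to zero
        have hs1 : Tendsto (fun n => Real.sqrt
            (((hherm n i).cfc (fun t => f t * f t)).trace.re / (d n : ℝ))) atTop (𝓝 0) := by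
          have h5 := (Real.continuous_sqrt.tendsto 0).comp (hDtend i)
          rw [Real.sqrt_zero] at h5
          exact h5
        have hs2 : Tendsto (fun n => Real.sqrt (c * β n)) atTop
            (𝓝 (Real.sqrt (c * (L (w.reverse ++ w)).re))) :=
          (Real.continuous_sqrt.tendsto _).comp (tendsto_const_nhds.mul hβconv)
        have hs3 := hs1.mul hs2
        rw [zero_mul] at hs3
        exact squeeze_zero_norm hb hs3
      have hsum := T1.add (ihw (v ++ [i]))
      rw [add_zero] at hsum
      refine Tendsto.congr (fun n => ?_) hsum
      exact (hsplit n).symm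
  -- conclude
  intro w
  have h0 := main w []
  have h1 : ∀ n, normTrace (evalWord ([] : List (Fin k)) (fun i => (hherm n i).cfc h) *
      (evalWord w (g n) - evalWord w (fun i => (hherm n i).cfc h)))
      = normTrace (evalWord w (g n)) - normTrace (evalWord w (fun i => (hherm n i).cfc h)) := by
    intro n
    rw [show evalWord ([] : List (Fin k)) (fun i => (hherm n i).cfc h) = 1 from rfl, one_mul,
      normTrace_sub]
  rw [tendsto_congr h1] at h0
  have h2 := (hL w).sub h0
  rw [sub_zero] at h2
  refine Tendsto.congr (fun n => ?_) h2
  ring
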